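/- Let d be a positive integer and let S^(d) be the subsemigroup of the multiplicative semigroup M₂(ℤ) of 2×2 integer matrices generated by g = [[1, d], [0, 1]] and e = [[1, 0], [1, 0]]. Then S^(d) has intermediate growth: with respect to the generating set A = {e, g}, lim_{n→∞} (log γ_A(n))/(log n) = ∞ and lim_{n→∞} (log γ_A(n))/n = 0. -/

import Mathlib

open Filter

/-- The growth function `γ_A(n)` of the semigroup generated by `A` (with identity
adjoined): the number of elements expressible as a product of at most `n`
elements of `A`. -/
noncomputable def growth {S : Type*} [Monoid S] (A : Set S) (n : ℕ) : ℕ :=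
  Set.ncard {x : S | ∃ l : List S, (∀ a ∈ l, a ∈ A) ∧ l.length ≤ n ∧ l.prod = x}

namespace Stmt12

/-! ### Combinatorial recovery lemmas -/

lemma pad_recover (s : ℕ) (L : List ℕ) (hL : ∀ x ∈ L, 0 < x) (hl : L.length ≤ s) :
    (List.ofFn (fun i : Fin s => L.getD i 0)).filter (fun x => decide (0 < x)) = L := by
  have hofn : List.ofFn (fun i : Fin s => L.getD i 0) = L ++ List.replicate (s - L.length) 0 := by
    apply List.ext_getElem
    · simp; omega
    · intro i h1 h2
      simp only [List.getElem_ofFn]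
      by_cases hi : i < L.length
      · rw [List.getD_eq_getElem L 0 hi, List.getElem_append_left hi]
      · rw [List.getD_eq_default L 0 (by omega), List.getElem_append_right (by omega)]
        simp
  rw [hofn, List.filter_append]
  have h1 : L.filter (fun x => decide (0 < x)) = L :=
    List.filter_eq_self.2 (fun a ha => by simpa using hL a ha)
  have h2 : (List.replicate (s - L.length) 0).filter (fun x => decide (0 < x)) = [] := by
    simp
  rw [h1, h2, List.append_nil]

lemma small_recover (s : ℕ) (M : Multiset ℕ) (hpos : ∀ i ∈ M, 0 < i) :
    (∑ i : Fin s, Multiset.replicate (M.count ((i:ℕ)+1)) ((i:ℕ)+1))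
      = M.filter (fun x => ¬ s < x) := by
  ext p
  rw [Multiset.count_sum', Multiset.count_filter]
  by_cases hp : ¬ s < p
  · simp only [hp, if_true]
    by_cases hp0 : p = 0
    · subst hp0
      have : M.count 0 = 0 := Multiset.count_eq_zero.2 (fun h => by simpa using hpos 0 h)
      rw [this]
      apply Finset.sum_eq_zero
      intro i _
      rw [Multiset.count_replicate, if_neg (by omega)]
    · have hplt : p - 1 < s := by omega
      rw [Finset.sum_eq_single (⟨p - 1, hplt⟩ : Fin s)]
      · simp only [Fin.val_mk]
        have hpp : p - 1 + 1 = p := by omega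
        rw [Multiset.count_replicate, if_pos hpp, hpp]
        simp
      · intro i _ hi
        rw [Multiset.count_replicate, if_neg]
        intro h
        exact hi (Fin.ext (by simp only [Fin.val_mk]; omega))
      · intro h; exact absurd (Finset.mem_univ _) h
  · simp only [hp, if_false]
    apply Finset.sum_eq_zero
    intro i _
    rw [Multiset.count_replicate, if_neg (by omega)]

lemma big_card_le (n : ℕ) (M : Multiset ℕ) (hsum : M.sum ≤ n) :
    Multiset.card (M.filter (fun x => n.sqrt + 1 < x)) ≤ n.sqrt + 1 := by
  set s := n.sqrt + 1
  set F := M.filter (fun x => s < x) with hF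
  have h1 : Multiset.card F • (s + 1) ≤ F.sum :=
    Multiset.card_nsmul_le_sum (fun x hx => by
      have := Multiset.of_mem_filter hx; omega)
  have h2 : F.sum ≤ M.sum := by
    obtain ⟨R, hR⟩ := Multiset.le_iff_exists_add.1 (Multiset.filter_le (fun x => s < x) M)
    rw [← hF] at hR
    rw [hR, Multiset.sum_add]
    exact Nat.le_add_right _ _
  have h3 : n < s * s := by
    have := Nat.lt_succ_sqrt n
    simpa [s, Nat.succ_eq_add_one] using this
  simp only [smul_eq_mul] at h1
  nlinarith [h1.trans (h2.trans hsum)]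

/-! ### The matrices -/

variable (d : ℕ)

noncomputable abbrev Gm : Matrix (Fin 2) (Fin 2) ℤ := !![(1:ℤ), (d:ℤ); 0, 1]
noncomputable abbrev Em : Matrix (Fin 2) (Fin 2) ℤ := !![(1:ℤ), 0; 1, 0]

lemma hGpow (a : ℕ) : Gm d ^ a = !![(1:ℤ), a*d; 0, 1] := by
  induction a with
  | zero => ext i j; fin_cases i <;> fin_cases j <;> simp
  | succ n ih =>
    rw [pow_succ, ih]; ext i j; fin_cases i <;> fin_cases j <;>
      simp [Matrix.mul_apply, Fin.sum_univ_two] <;> ring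

lemma hEGE (a : ℕ) : Em * Gm d ^ a * Em = (1 + (a:ℤ)*d) • Em := by
  rw [hGpow]
  ext i j; fin_cases i <;> fin_cases j <;>
    simp [Matrix.mul_apply, Fin.sum_univ_two] <;> ring

/-- the scalar attached to a multiset of `g`-run lengths -/
def prodZ (M : Multiset ℕ) : ℤ := (M.map (fun i => 1 + (i:ℤ)*d)).prod

lemma prodZ_zero : prodZ d 0 = 1 := by simp [prodZ]

lemma prodZ_cons (a : ℕ) (M : Multiset ℕ) :
    prodZ d (a ::ₘ M) = (1 + (a:ℤ)*d) * prodZ d M := by simp [prodZ]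

lemma prodZ_add (A B : Multiset ℕ) : prodZ d (A + B) = prodZ d A * prodZ d B := by
  simp [prodZ]

lemma prodZ_replicate (k x : ℕ) : prodZ d (Multiset.replicate k x) = (1 + (x:ℤ)*d)^k := by
  simp [prodZ, Multiset.map_replicate, Multiset.prod_replicate]

/-- Normal form of any word in `{g, e}`. -/
lemma normal_form (l : List (Matrix (Fin 2) (Fin 2) ℤ))
    (hl : ∀ x ∈ l, x ∈ ({Gm d, Em} : Set (Matrix (Fin 2) (Fin 2) ℤ))) :
    l.prod = Gm d ^ l.length ∨
    ∃ (M : Multiset ℕ) (a b : ℕ), (∀ i ∈ M, 0 < i) ∧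
      M.sum + Multiset.card M + a + b + 1 ≤ l.length ∧
      l.prod = prodZ d M • (Gm d ^ a * Em * Gm d ^ b) := by
  induction l with
  | nil => left; simp
  | cons x l ih =>
    have hx : x = Gm d ∨ x = Em := hl x List.mem_cons_self
    have hl' : ∀ y ∈ l, y ∈ ({Gm d, Em} : Set (Matrix (Fin 2) (Fin 2) ℤ)) :=
      fun y hy => hl y (List.mem_cons_of_mem x hy)
    rcases ih hl' with h | ⟨M, a, b, hpos, hcost, h⟩
    · rcases hx with rfl | rfl
      · left; rw [List.prod_cons, h, List.length_cons, pow_succ']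
      · right
        refine ⟨0, 0, l.length, by simp, by simp, ?_⟩
        rw [List.prod_cons, h, prodZ_zero, one_smul, pow_zero, one_mul]
    · rcases hx with rfl | rfl
      · right
        refine ⟨M, a + 1, b, hpos, by simp only [List.length_cons]; omega, ?_⟩
        · rw [List.prod_cons, h, Matrix.mul_smul]
          congr 1
          rw [← mul_assoc, ← mul_assoc, ← pow_succ']
      · right
        rw [List.prod_cons, h, Matrix.mul_smul, ← mul_assoc, ← mul_assoc, hEGE, Matrix.smul_mul,
          smul_smul]
        by_cases ha : a = 0
        · subst ha
          refine ⟨M, 0, b, hpos, ?_, ?_⟩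
          · simp only [List.length_cons]; omega
          · rw [pow_zero, one_mul]; simp [mul_comm]
        · refine ⟨a ::ₘ M, 0, b, ?_, ?_, ?_⟩
          · intro i hi
            rcases Multiset.mem_cons.1 hi with rfl | hi
            · exact Nat.pos_of_ne_zero ha
            · exact hpos i hi
          · simp only [List.length_cons, Multiset.sum_cons, Multiset.card_cons]; omega
          · rw [prodZ_cons, pow_zero, one_mul]; ring_nf

/-! ### The growth set and the upper bound -/

def Wset (n : ℕ) : Set (Matrix (Fin 2) (Fin 2) ℤ) :=
  {x | ∃ l : List (Matrix (Fin 2) (Fin 2) ℤ),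
    (∀ a ∈ l, a ∈ ({Gm d, Em} : Set (Matrix (Fin 2) (Fin 2) ℤ))) ∧ l.length ≤ n ∧ l.prod = x}

variable (n : ℕ)

abbrev Pty : Type :=
  Fin (n+1) ⊕ ((Fin (n.sqrt+1) → Fin (n+1)) × (Fin (n.sqrt+1) → Fin (n+1)) × Fin (n+1) × Fin (n+1))

noncomputable def θ : Pty n → Matrix (Fin 2) (Fin 2) ℤ :=
  Sum.elim (fun k => Gm d ^ (k:ℕ))
    (fun q => prodZ d
      ((∑ i : Fin (n.sqrt+1), Multiset.replicate (q.1 i : ℕ) ((i:ℕ)+1)) +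
        ↑((List.ofFn (fun i => (q.2.1 i : ℕ))).filter (fun x => decide (0 < x))))
      • (Gm d ^ (q.2.2.1:ℕ) * Em * Gm d ^ (q.2.2.2:ℕ)))

lemma Wset_subset : Wset d n ⊆ Set.range (θ d n) := by
  rintro x ⟨l, hl, hlen, rfl⟩
  rcases normal_form d l hl with h | ⟨M, a, b, hpos, hcost, h⟩
  · exact ⟨Sum.inl ⟨l.length, by omega⟩, by simp [θ, h]⟩
  · set s := n.sqrt + 1 with hs
    have hsum : M.sum ≤ n := by omega
    have hcard : Multiset.card M ≤ n := by omega
    have ha : a ≤ n := by omega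
    have hb : b ≤ n := by omega
    set LM : List ℕ := (M.filter (fun x => s < x)).sort (·≤·) with hLM
    have hLMlen : LM.length ≤ s := by
      rw [hLM, Multiset.length_sort]
      exact big_card_le n M hsum
    have hLMmem : ∀ x ∈ LM, s < x := by
      intro x hx
      rw [hLM, Multiset.mem_sort] at hx
      exact Multiset.of_mem_filter hx
    have hLMle : ∀ x ∈ LM, x ≤ n := by
      intro x hx
      rw [hLM, Multiset.mem_sort] at hx
      have hxM : x ∈ M := Multiset.mem_of_mem_filter hx
      exact (Multiset.le_sum_of_mem hxM).trans hsum
    have hcount : ∀ i : Fin s, M.count ((i:ℕ)+1) ≤ n :=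
      fun i => (Multiset.count_le_card _ M).trans hcard
    refine ⟨Sum.inr ⟨fun i => ⟨M.count ((i:ℕ)+1), Nat.lt_succ_of_le (hcount i)⟩,
      fun i => ⟨LM.getD i 0, ?_⟩, ⟨a, by omega⟩, ⟨b, by omega⟩⟩, ?_⟩
    · rcases Nat.lt_or_ge (i:ℕ) LM.length with hi | hi
      · rw [List.getD_eq_getElem LM 0 hi]
        have := hLMle _ (LM.getElem_mem hi)
        omega
      · rw [List.getD_eq_default LM 0 hi]; omega
    · simp only [θ, Sum.elim_inr]
      have hdec : ((∑ i : Fin s, Multiset.replicate (M.count ((i:ℕ)+1)) ((i:ℕ)+1)) +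
          ↑((List.ofFn (fun i : Fin s => LM.getD (i:ℕ) 0)).filter (fun x => decide (0 < x))))
          = M := by
        rw [pad_recover s LM (fun x hx => by have := hLMmem x hx; omega) hLMlen]
        rw [small_recover]
        · rw [hLM, Multiset.sort_eq]
          rw [add_comm, Multiset.filter_add_not]
        · exact hpos
      rw [hdec, h]

lemma Wset_finite : (Wset d n).Finite :=
  (Set.finite_range (θ d n)).subset (Wset_subset d n)

lemma Wset_card_le : (Wset d n).ncard ≤ (n+1) + (n+1)^(2*(n.sqrt+1)+2) := by
  have h1 : (Wset d n).ncard ≤ (Set.range (θ d n)).ncard :=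
    Set.ncard_le_ncard (Wset_subset d n) (Set.finite_range (θ d n))
  have h2 : (Set.range (θ d n)).ncard ≤ Nat.card (Pty n) := by
    rw [← Set.image_univ]
    calc ((θ d n) '' Set.univ).ncard ≤ (Set.univ : Set (Pty n)).ncard :=
          Set.ncard_image_le Set.finite_univ
      _ = Nat.card (Pty n) := Set.ncard_univ _
  have h3 : Nat.card (Pty n) = (n+1) + (n+1)^(2*(n.sqrt+1)+2) := by
    rw [Nat.card_eq_fintype_card]
    simp only [Fintype.card_sum, Fintype.card_prod, Fintype.card_fun, Fintype.card_fin]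
    ring
  omega

lemma one_mem_Wset : (1 : Matrix (Fin 2) (Fin 2) ℤ) ∈ Wset d n :=
  ⟨[], by simp, by simp, by simp⟩

lemma Wset_card_pos : 0 < (Wset d n).ncard :=
  (Set.ncard_pos (Wset_finite d n)).2 ⟨1, one_mem_Wset d n⟩

/-! ### Lower bound: many elements -/

/-- realize `prodZ M • e` as a word -/
lemma build (M : Multiset ℕ) : ∃ l : List (Matrix (Fin 2) (Fin 2) ℤ),
    (∀ x ∈ l, x ∈ ({Gm d, Em} : Set (Matrix (Fin 2) (Fin 2) ℤ))) ∧
    l.length = M.sum + Multiset.card M + 1 ∧ l.prod = prodZ d M • Em := by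
  induction M using Multiset.induction_on with
  | empty =>
    exact ⟨[Em], by simp, by simp, by simp [prodZ]⟩
  | cons a M ih =>
    obtain ⟨l, hmem, hlen, hprod⟩ := ih
    refine ⟨Em :: (List.replicate a (Gm d) ++ l), ?_, ?_, ?_⟩
    · intro x hx
      rcases List.mem_cons.1 hx with rfl | hx
      · exact Or.inr rfl
      · rcases List.mem_append.1 hx with hx | hx
        · exact Or.inl (List.eq_of_mem_replicate hx)
        · exact hmem x hx
    · simp [hlen, Multiset.sum_cons, Multiset.card_cons]; ring
    · rw [List.prod_cons, List.prod_append, List.prod_replicate, hprod,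
        Matrix.mul_smul, Matrix.mul_smul, ← mul_assoc, hEGE, smul_smul, prodZ_cons,
        mul_comm (prodZ d M)]

lemma prodZ_finsum {ι : Type*} (s : Finset ι) (f : ι → Multiset ℕ) :
    prodZ d (∑ i ∈ s, f i) = ∏ i ∈ s, prodZ d (f i) := by
  classical
  induction s using Finset.induction_on with
  | empty => simp [prodZ_zero]
  | insert _ _ h ih => rw [Finset.sum_insert h, prodZ_add, ih, Finset.prod_insert h]

lemma exists_primes (t : ℕ) : ∃ T : Finset ℕ, T.card = t ∧ ∀ p ∈ T, p.Prime ∧ d < p := by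
  have hinf : ({p | Nat.Prime p} \ Set.Iic d).Infinite :=
    Nat.infinite_setOf_prime.diff (Set.finite_Iic d)
  obtain ⟨T, hsub, hcard⟩ := hinf.exists_subset_card_eq t
  refine ⟨T, hcard, fun p hp => ?_⟩
  have := hsub hp
  exact ⟨this.1, by simpa using this.2⟩

lemma card_finsum {ι : Type*} (s : Finset ι) (f : ι → Multiset ℕ) :
    Multiset.card (∑ i ∈ s, f i) = ∑ i ∈ s, Multiset.card (f i) := by
  classical
  induction s using Finset.induction_on with
  | empty => simp
  | insert _ _ h ih => rw [Finset.sum_insert h, Multiset.card_add, ih, Finset.sum_insert h]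

lemma sum_finsum {ι : Type*} (s : Finset ι) (f : ι → Multiset ℕ) :
    (∑ i ∈ s, f i).sum = ∑ i ∈ s, (f i).sum := by
  classical
  induction s using Finset.induction_on with
  | empty => simp
  | insert _ _ h ih => rw [Finset.sum_insert h, Multiset.sum_add, ih, Finset.sum_insert h]

lemma lower (hd : 0 < d) (t : ℕ) : ∃ Q : ℕ, 1 ≤ Q ∧ ∀ E n : ℕ, t * (E * Q) + 1 ≤ n →
    (E+1)^t ≤ (Wset d n).ncard := by
  classical
  obtain ⟨T, hTcard, hT⟩ := exists_primes d t
  set q : ℕ → ℕ := fun p => p ^ d.totient with hq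
  refine ⟨T.sup q + 1, Nat.le_add_left 1 _, ?_⟩
  intro E n hn
  set a : ℕ → ℕ := fun p => (q p - 1) / d with ha
  have htot : 0 < d.totient := Nat.totient_pos.2 hd
  have hqpos : ∀ p ∈ T, 1 ≤ q p := by
    intro p hp
    exact Nat.one_le_iff_ne_zero.2 (pow_ne_zero _ (hT p hp).1.pos.ne')
  have hkey : ∀ p ∈ T, 1 + a p * d = q p := by
    intro p hp
    have hprime := (hT p hp).1
    have hdp := (hT p hp).2
    have hcop : Nat.Coprime p d := by
      rw [hprime.coprime_iff_not_dvd]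
      intro hdvd
      exact absurd (Nat.le_of_dvd hd hdvd) (by omega)
    have hmod : q p ≡ 1 [MOD d] := Nat.ModEq.pow_totient hcop
    have hdvd : d ∣ q p - 1 := (Nat.modEq_iff_dvd' (hqpos p hp)).1 hmod.symm
    have : a p * d = q p - 1 := Nat.div_mul_cancel hdvd
    have h1 := hqpos p hp
    omega
  -- the injection
  set Mv : (↥T → Fin (E+1)) → Multiset ℕ :=
    fun v => ∑ p : ↥T, Multiset.replicate (v p : ℕ) (a p.val) with hMv
  set Ψ : (↥T → Fin (E+1)) → Matrix (Fin 2) (Fin 2) ℤ :=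
    fun v => prodZ d (Mv v) • Em with hΨ
  have hval : ∀ v : ↥T → Fin (E+1), prodZ d (Mv v)
      = ((∏ p : ↥T, (p : ℕ) ^ (d.totient * (v p : ℕ)) : ℕ) : ℤ) := by
    intro v
    rw [hMv, prodZ_finsum]
    push_cast
    apply Finset.prod_congr rfl
    intro p _
    rw [prodZ_replicate]
    have h := hkey p.val p.prop
    have : (1 : ℤ) + (a p.val : ℤ) * d = ((q p.val : ℕ) : ℤ) := by
      rw [← h]; push_cast; ring
    rw [this, hq]
    push_cast
    rw [← pow_mul]
  have hinj : Function.Injective Ψ := by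
    intro v w hvw
    have hv := hval v
    have hw := hval w
    rw [hΨ] at hvw
    simp only at hvw
    have hsc : prodZ d (Mv v) = prodZ d (Mv w) := by
      have := congrFun (congrFun hvw 0) 0
      simpa [Matrix.smul_apply] using this
    rw [hv, hw] at hsc
    have hnat : (∏ p : ↥T, (p:ℕ) ^ (d.totient * (v p : ℕ)))
        = ∏ p : ↥T, (p:ℕ) ^ (d.totient * (w p : ℕ)) := by exact_mod_cast hsc
    funext p
    have hfac : ∀ u : ↥T → Fin (E+1),
        (∏ p' : ↥T, (p':ℕ) ^ (d.totient * (u p' : ℕ))).factorization p.val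
          = d.totient * (u p : ℕ) := by
      intro u
      rw [Nat.factorization_prod (fun p' _ => pow_ne_zero _ (hT p'.val p'.prop).1.pos.ne')]
      rw [Finsupp.finset_sum_apply]
      rw [Finset.sum_eq_single p]
      · rw [(hT p.val p.prop).1.factorization_pow, Finsupp.single_apply, if_pos rfl]
      · intro p' _ hne
        rw [(hT p'.val p'.prop).1.factorization_pow, Finsupp.single_apply, if_neg]
        exact fun h => hne (Subtype.ext h)
      · intro h; exact absurd (Finset.mem_univ _) h
    have h1 := hfac v
    have h2 := hfac w
    rw [hnat] at h1
    exact Fin.ext (Nat.eq_of_mul_eq_mul_left htot (h1.symm.trans h2))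
  -- the image lies in the growth set
  have himg : Ψ '' Set.univ ⊆ Wset d n := by
    rintro x ⟨v, -, rfl⟩
    obtain ⟨l, hmem, hlen, hprod⟩ := build d (Mv v)
    refine ⟨l, hmem, ?_, hprod⟩
    rw [hlen, hMv]
    simp only [card_finsum, sum_finsum, Multiset.card_replicate, Multiset.sum_replicate,
      smul_eq_mul]
    have hbound : ∀ p : ↥T, (v p : ℕ) * a p.val + (v p : ℕ) ≤ E * (T.sup q + 1) := by
      intro p
      have h1 : a p.val + 1 ≤ q p.val := by have := hkey p.val p.prop; nlinarith [hd]
      have h2 : q p.val ≤ T.sup q := Finset.le_sup p.prop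
      have h3 : (v p : ℕ) ≤ E := Nat.lt_succ_iff.1 (v p).isLt
      calc (v p : ℕ) * a p.val + (v p : ℕ) = (v p : ℕ) * (a p.val + 1) := by ring
        _ ≤ E * (T.sup q + 1) := Nat.mul_le_mul h3 (by omega)
    have hsple : (∑ p : ↥T, (v p : ℕ) * a p.val) + (∑ p : ↥T, (v p : ℕ))
        ≤ t * (E * (T.sup q + 1)) := by
      rw [← Finset.sum_add_distrib]
      calc (∑ p : ↥T, ((v p : ℕ) * a p.val + (v p : ℕ)))
          ≤ (Finset.univ : Finset ↥T).card • (E * (T.sup q + 1)) :=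
            Finset.sum_le_card_nsmul _ _ _ (fun p _ => hbound p)
        _ = t * (E * (T.sup q + 1)) := by
            rw [smul_eq_mul, Finset.card_univ, Fintype.card_coe, hTcard]
    omega
  -- conclude
  have hcard : (Ψ '' Set.univ).ncard = (E+1)^t := by
    rw [Set.ncard_image_of_injective _ hinj, Set.ncard_univ, Nat.card_eq_fintype_card,
      Fintype.card_fun, Fintype.card_fin, Fintype.card_coe, hTcard]
  calc (E+1)^t = (Ψ '' Set.univ).ncard := hcard.symm
    _ ≤ (Wset d n).ncard := Set.ncard_le_ncard himg (Wset_finite d n)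

lemma part2 : Tendsto (fun n : ℕ => Real.log ((Wset d n).ncard) / (n:ℝ)) atTop (nhds 0) := by
  have hlim : Tendsto (fun x : ℝ => 14 * (Real.log x / x ^ ((1:ℝ)/2))) atTop (nhds 0) := by
    have h := (isLittleO_log_rpow_atTop (by norm_num : (0:ℝ) < 1/2)).tendsto_div_nhds_zero
    simpa using h.const_mul (14:ℝ)
  have hlim2 : Tendsto (fun n : ℕ => 14 * (Real.log n / (n:ℝ) ^ ((1:ℝ)/2))) atTop (nhds 0) := by
    exact hlim.comp tendsto_natCast_atTop_atTop
  apply squeeze_zero' ?_ ?_ hlim2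
  · apply Filter.Eventually.of_forall
    intro n
    apply div_nonneg _ n.cast_nonneg
    apply Real.log_nonneg
    exact_mod_cast Wset_card_pos d n
  · filter_upwards [eventually_ge_atTop 2] with n hn
    have hn1 : (1:ℝ) ≤ (n:ℝ) := by exact_mod_cast (by omega : 1 ≤ n)
    have hnpos : (0:ℝ) < (n:ℝ) := by linarith
    have hsq1 : (1:ℝ) ≤ Real.sqrt n := by
      rw [show (1:ℝ) = Real.sqrt 1 by simp]
      exact Real.sqrt_le_sqrt hn1
    -- natural number bound
    have hnat : (Wset d n).ncard ≤ (n+1)^(2*n.sqrt+5) := by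
      have h0 := Wset_card_le d n
      have h1 : (n+1) ≤ (n+1)^(2*(n.sqrt+1)+2) := Nat.le_self_pow (by omega) _
      have h2 : 2*(n.sqrt+1)+2 = 2*n.sqrt+4 := by ring
      have h3 : (n+1)^(2*n.sqrt+5) = (n+1)^(2*n.sqrt+4) * (n+1) := by ring
      have h4 : 2 ≤ n + 1 := by omega
      rw [h2] at h0 h1
      calc (Wset d n).ncard ≤ (n+1) + (n+1)^(2*n.sqrt+4) := h0
        _ ≤ 2 * (n+1)^(2*n.sqrt+4) := by omega
        _ ≤ (n+1)^(2*n.sqrt+4) * (n+1) := by nlinarith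
        _ = (n+1)^(2*n.sqrt+5) := h3.symm
    have hlog : Real.log ((Wset d n).ncard) ≤ (2*(n.sqrt:ℝ)+5) * Real.log (n+1) := by
      have hpos : (0:ℝ) < ((Wset d n).ncard : ℝ) := by exact_mod_cast Wset_card_pos d n
      calc Real.log ((Wset d n).ncard) ≤ Real.log (((n+1)^(2*n.sqrt+5) : ℕ) : ℝ) := by
            apply Real.log_le_log hpos
            exact_mod_cast hnat
        _ = (2*(n.sqrt:ℝ)+5) * Real.log (n+1) := by
            push_cast
            rw [Real.log_pow]
            push_cast
            ring
    have hcoef : (2*(n.sqrt:ℝ)+5) ≤ 7 * Real.sqrt n := by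
      have h1 : ((n.sqrt:ℝ)) ≤ Real.sqrt n := Real.nat_sqrt_le_real_sqrt
      nlinarith
    have hlogn1 : Real.log ((n:ℝ)+1) ≤ 2 * Real.log n := by
      have hn2r : (2:ℝ) ≤ (n:ℝ) := by exact_mod_cast hn
      rw [show (2:ℝ) * Real.log n = Real.log ((n:ℝ)^2) by rw [Real.log_pow]; push_cast; ring]
      apply Real.log_le_log (by linarith)
      nlinarith
    have hlogn0 : 0 ≤ Real.log ((n:ℝ)+1) := Real.log_nonneg (by linarith)
    have hlogn2 : 0 ≤ Real.log (n:ℝ) := Real.log_nonneg hn1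
    have hchain : Real.log ((Wset d n).ncard) ≤ 14 * Real.log n * Real.sqrt n := by
      calc Real.log ((Wset d n).ncard) ≤ (2*(n.sqrt:ℝ)+5) * Real.log ((n:ℝ)+1) := by
            exact_mod_cast hlog
        _ ≤ (7 * Real.sqrt n) * (2 * Real.log n) := by
            apply mul_le_mul hcoef hlogn1 hlogn0 (by positivity)
        _ = 14 * Real.log n * Real.sqrt n := by ring
    calc Real.log ((Wset d n).ncard) / (n:ℝ) ≤ (14 * Real.log n * Real.sqrt n) / (n:ℝ) :=
          (div_le_div_iff_of_pos_right hnpos).2 hchain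
      _ = 14 * (Real.log n / (n:ℝ) ^ ((1:ℝ)/2)) := by
          rw [← Real.sqrt_eq_rpow]
          rw [show (14:ℝ) * Real.log n * Real.sqrt n / n = 14 * (Real.log n * (Real.sqrt n / n)) by ring]
          rw [Real.sqrt_div_self']
          ring

lemma part1 (hd : 0 < d) :
    Tendsto (fun n : ℕ => Real.log ((Wset d n).ncard) / Real.log n) atTop atTop := by
  rw [tendsto_atTop]
  intro C
  set t := ⌈C⌉₊ + 1 with ht
  obtain ⟨Q, hQ1, hQ⟩ := lower d hd t
  have hR1 : 1 ≤ t * Q := Nat.one_le_iff_ne_zero.2 (by positivity)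
  set R := t * Q with hR
  have hlogR : Tendsto (fun n : ℕ => Real.log n) atTop atTop :=
    Real.tendsto_log_atTop.comp tendsto_natCast_atTop_atTop
  filter_upwards [eventually_ge_atTop 2, hlogR.eventually_ge_atTop ((t:ℝ) * Real.log R),
    hlogR.eventually_gt_atTop 0] with n hn2 hlogn hlogpos
  set E := (n - 1) / R with hE
  have hcost : t * (E * Q) + 1 ≤ n := by
    have h1 : E * R ≤ n - 1 := Nat.div_mul_le_self _ _
    have h2 : t * (E * Q) = E * R := by rw [hR]; ring
    omega
  have hγ := hQ E n hcost
  have hnR : n ≤ R * (E + 1) := by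
    have hx : R * ((n-1)/R) + (n-1) % R = n - 1 := Nat.div_add_mod _ _
    have hm : (n-1) % R < R := Nat.mod_lt _ (by omega)
    have key : ∀ P rem : ℕ, P + rem = n - 1 → rem < R → n ≤ P + R := by intros; omega
    have h4 := key _ _ hx hm
    calc n ≤ R * ((n-1)/R) + R := h4
      _ = R * (E + 1) := by rw [← hE]; ring
  -- real versions
  have hRr : (0:ℝ) < (R:ℝ) := by exact_mod_cast hR1
  have hnr : (0:ℝ) < (n:ℝ) := by exact_mod_cast (by omega : 0 < n)
  have hEr : (n:ℝ)/(R:ℝ) ≤ (E:ℝ)+1 := by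
    rw [div_le_iff₀ hRr]
    have : (n:ℝ) ≤ (R:ℝ) * ((E:ℝ)+1) := by exact_mod_cast hnR
    linarith
  have hlogE : Real.log n - Real.log R ≤ Real.log ((E:ℝ)+1) := by
    rw [← Real.log_div hnr.ne' hRr.ne']
    exact Real.log_le_log (by positivity) hEr
  have hlogγ : (t:ℝ) * Real.log ((E:ℝ)+1) ≤ Real.log ((Wset d n).ncard) := by
    have hcast : (((E+1)^t : ℕ) : ℝ) ≤ ((Wset d n).ncard : ℝ) := by exact_mod_cast hγ
    have := Real.log_le_log (by positivity) hcast
    calc (t:ℝ) * Real.log ((E:ℝ)+1) = Real.log ((((E:ℝ)+1))^t) := by rw [Real.log_pow]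
      _ = Real.log (((E+1)^t : ℕ) : ℝ) := by push_cast; ring_nf
      _ ≤ Real.log ((Wset d n).ncard) := this
  have ht0 : (0:ℝ) ≤ (t:ℝ) := Nat.cast_nonneg t
  calc C ≤ (t:ℝ) - 1 := by
        have := Nat.le_ceil C
        rw [ht]; push_cast; linarith
    _ ≤ (t:ℝ) - (t:ℝ) * Real.log R / Real.log n := by
        have h6 : (t:ℝ) * Real.log R / Real.log n ≤ 1 := (div_le_one hlogpos).2 hlogn
        linarith
    _ = (t:ℝ) * (Real.log n - Real.log R) / Real.log n := by
        field_simp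
    _ ≤ (t:ℝ) * Real.log ((E:ℝ)+1) / Real.log n := by
        apply (div_le_div_iff_of_pos_right hlogpos).2
        exact mul_le_mul_of_nonneg_left hlogE ht0
    _ ≤ Real.log ((Wset d n).ncard) / Real.log n := (div_le_div_iff_of_pos_right hlogpos).2 hlogγ

end Stmt12

/-- for every positive integer `d`, the subsemigroup `S^(d)` of
`M₂(ℤ)` generated by `g = [[1,d],[0,1]]` and `e = [[1,0],[1,0]]` (with the
identity matrix adjoined) has intermediate growth with respect to `A = {e, g}`:
`lim_{n→∞} (log γ_A(n))/(log n) = ∞` and `lim_{n→∞} (log γ_A(n))/n = 0`. -/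
theorem stmt12 (d : ℕ) (hd : 0 < d) :
    Tendsto (fun n : ℕ =>
        Real.log (growth ({!![(1 : ℤ), (d : ℤ); 0, 1], !![(1 : ℤ), 0; 1, 0]} :
          Set (Matrix (Fin 2) (Fin 2) ℤ)) n) / Real.log n) atTop atTop ∧
    Tendsto (fun n : ℕ =>
        Real.log (growth ({!![(1 : ℤ), (d : ℤ); 0, 1], !![(1 : ℤ), 0; 1, 0]} :
          Set (Matrix (Fin 2) (Fin 2) ℤ)) n) / (n : ℝ)) atTop (nhds 0) :=
  ⟨Stmt12.part1 d hd, Stmt12.part2 d⟩
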